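/- Let (X, 𝒜, μ) be a measure space and let p > 1, q > 1 with 1/p + 1/q = 1; set A = (2 − 1/p)/3 and B = (1 + 1/p)/3. If f, g : X → ℝ are nonnegative integrable functions with ∫_X f dμ = 1 and ∫_X g dμ = 1, then 1 − ∫_X f^{1/p} g^{1/q} dμ ≥ (1/(2pq)) ∫_X (f − g)^2 / (A·f + B·g) dμ, where the integrand on the right is interpreted as 0 at points where f = g = 0. -/

import Mathlib

open MeasureTheory

section HolderAux

open Real Set
open Real

lemma amgm_step (s t : ℝ) (hs : 0 < s) (hs1 : s < 1) (ht : 0 < t) :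
    (2-s) * t ^ (s-1) ≤ 1 + (1-s) * t ^ (s-2) := by
  have h2s : (0:ℝ) < 2 - s := by linarith
  have w1 : (0:ℝ) ≤ 1/(2-s) := by positivity
  have w2 : (0:ℝ) ≤ (1-s)/(2-s) := by apply div_nonneg <;> linarith
  have hsum : 1/(2-s) + (1-s)/(2-s) = 1 := by field_simp; ring
  have hp2 : (0:ℝ) ≤ t ^ (s-2) := (rpow_pos_of_pos ht _).le
  have key := Real.geom_mean_le_arith_mean2_weighted w1 w2 zero_le_one hp2 hsum
  rw [Real.one_rpow, one_mul] at key
  have hrw : (t ^ (s-2)) ^ ((1-s)/(2-s)) = t ^ (s-1) := by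
    rw [← Real.rpow_mul ht.le]
    congr 1
    field_simp
    ring
  rw [hrw] at key
  have h2 := mul_le_mul_of_nonneg_left key h2s.le
  calc (2-s) * t ^ (s-1) ≤ (2-s) * (1/(2-s) * 1 + (1-s)/(2-s) * t ^ (s-2)) := h2
    _ = 1 + (1-s) * t ^ (s-2) := by field_simp

noncomputable def hfun (s t : ℝ) : ℝ :=
  (s*t + (1-s) - t^s) * ((2-s)/3*t + (1+s)/3) - s*(1-s)/2*(t-1)^2

noncomputable def h1fun (s t : ℝ) : ℝ :=
  (s - s*t^(s-1)) * ((2-s)/3*t + (1+s)/3) + (s*t + (1-s) - t^s) * ((2-s)/3)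
    - s*(1-s)*(t-1)

noncomputable def h2fun (s t : ℝ) : ℝ :=
  s*((1+s)/3)*(1 + (1-s)*t^(s-2) - (2-s)*t^(s-1))

lemma hasDeriv_h (s t : ℝ) (ht : 0 < t) : HasDerivAt (hfun s) (h1fun s t) t := by
  have hu : HasDerivAt (fun t : ℝ => s*t + (1-s) - t^s) (s - s*t^(s-1)) t := by
    have h1 : HasDerivAt (fun t : ℝ => s*t + (1-s)) s t := by
      simpa using ((hasDerivAt_id t).const_mul s).add_const (1-s)
    exact h1.sub (Real.hasDerivAt_rpow_const (Or.inl ht.ne'))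
  have hv : HasDerivAt (fun t : ℝ => (2-s)/3*t + (1+s)/3) ((2-s)/3) t := by
    simpa using ((hasDerivAt_id t).const_mul ((2-s)/3)).add_const ((1+s)/3)
  have hw : HasDerivAt (fun t : ℝ => s*(1-s)/2*(t-1)^2) (s*(1-s)*(t-1)) t := by
    have := (((hasDerivAt_id t).sub_const 1).pow 2).const_mul (s*(1-s)/2)
    refine this.congr_deriv (Eq.symm ?_)
    simp [id_eq]
    ring
  have := (hu.mul hv).sub hw
  have he : h1fun s t = (s - s*t^(s-1)) * ((2-s)/3*t + (1+s)/3) + (s*t + (1-s) - t^s) * ((2-s)/3) - s*(1-s)*(t-1) := rfl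
  rw [he]
  exact this

lemma hasDeriv_h1 (s t : ℝ) (ht : 0 < t) : HasDerivAt (h1fun s) (h2fun s t) t := by
  have h2 : HasDerivAt (fun t : ℝ => t^s) (s * t^(s-1)) t :=
    Real.hasDerivAt_rpow_const (Or.inl ht.ne')
  have h3 : HasDerivAt (fun t : ℝ => t^(s-1)) ((s-1) * t^(s-2)) t := by
    have := Real.hasDerivAt_rpow_const (x := t) (p := s-1) (Or.inl ht.ne')
    rwa [show s-1-1 = s-2 by ring] at this
  have hu : HasDerivAt (fun t : ℝ => s - s*t^(s-1)) (-(s*((s-1) * t^(s-2)))) t :=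
    (h3.const_mul s).const_sub s
  have hv : HasDerivAt (fun t : ℝ => (2-s)/3*t + (1+s)/3) ((2-s)/3) t := by
    simpa using ((hasDerivAt_id t).const_mul ((2-s)/3)).add_const ((1+s)/3)
  have hu2 : HasDerivAt (fun t : ℝ => (s*t + (1-s) - t^s) * ((2-s)/3))
      ((s - s*t^(s-1)) * ((2-s)/3)) t := by
    have h1 : HasDerivAt (fun t : ℝ => s*t + (1-s)) s t := by
      simpa using ((hasDerivAt_id t).const_mul s).add_const (1-s)
    exact (h1.sub (Real.hasDerivAt_rpow_const (Or.inl ht.ne'))).mul_const ((2-s)/3)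
  have hw : HasDerivAt (fun t : ℝ => s*(1-s)*(t-1)) (s*(1-s)) t := by
    simpa using ((hasDerivAt_id t).sub_const 1).const_mul (s*(1-s))
  have := ((hu.mul hv).add hu2).sub hw
  refine this.congr_deriv (Eq.symm ?_)
  have e : t^(s-2)*t = t^(s-1) := by
    rw [← Real.rpow_add_one ht.ne', show s-2+1 = s-1 by ring]
  unfold h2fun
  linear_combination (-(s*(2/3) - s^2 + s^3*(1/3))) * e

lemma h2_nonneg (s t : ℝ) (hs : 0 < s) (hs1 : s < 1) (ht : 0 < t) : 0 ≤ h2fun s t := by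
  have key : (2-s) * t ^ (s-1) ≤ 1 + (1-s) * t ^ (s-2) := amgm_step s t hs hs1 ht
  unfold h2fun
  have h1 : (0:ℝ) ≤ s*((1+s)/3) := by positivity
  nlinarith

lemma h1_at_one (s : ℝ) : h1fun s 1 = 0 := by
  unfold h1fun; simp [Real.one_rpow]

lemma h_at_one (s : ℝ) : hfun s 1 = 0 := by
  unfold hfun; simp [Real.one_rpow]

lemma h1_mono (s : ℝ) (hs : 0 < s) (hs1 : s < 1) : MonotoneOn (h1fun s) (Set.Ioi 0) := by
  apply monotoneOn_of_deriv_nonneg (convex_Ioi 0)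
  · exact fun t ht => (hasDeriv_h1 s t ht).continuousAt.continuousWithinAt
  · rw [interior_Ioi]
    exact fun t ht => (hasDeriv_h1 s t ht).differentiableAt.differentiableWithinAt
  · rw [interior_Ioi]
    intro t ht
    rw [(hasDeriv_h1 s t ht).deriv]
    exact h2_nonneg s t hs hs1 ht

lemma h_cont (s : ℝ) (hs : 0 < s) : Continuous (hfun s) := by
  unfold hfun
  exact (((continuous_const.mul continuous_id).add continuous_const).sub
      (Real.continuous_rpow_const hs.le)).mul
      ((continuous_const.mul continuous_id).add continuous_const) |>.sub
      (continuous_const.mul ((continuous_id.sub continuous_const).pow 2))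

lemma h_nonneg (s : ℝ) (hs : 0 < s) (hs1 : s < 1) : ∀ t, 0 ≤ t → 0 ≤ hfun s t := by
  intro t ht0
  rcases le_or_gt t 1 with htl | htg
  · -- antitone on [0,1]
    have hanti : AntitoneOn (hfun s) (Set.Icc 0 1) := by
      apply antitoneOn_of_deriv_nonpos (convex_Icc 0 1)
      · exact (h_cont s hs).continuousOn
      · rw [interior_Icc]
        exact fun t ht => (hasDeriv_h s t ht.1).differentiableAt.differentiableWithinAt
      · rw [interior_Icc]
        intro t ht
        rw [(hasDeriv_h s t ht.1).deriv]
        have := h1_mono s hs hs1 (Set.mem_Ioi.mpr ht.1) (Set.mem_Ioi.mpr one_pos) ht.2.le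
        rw [h1_at_one] at this
        exact this
    have := hanti (Set.mem_Icc.mpr ⟨ht0, htl⟩) (Set.mem_Icc.mpr ⟨zero_le_one, le_refl 1⟩) htl
    rwa [h_at_one s] at this
  · -- monotone on [1,∞)
    have hmono : MonotoneOn (hfun s) (Set.Ici 1) := by
      apply monotoneOn_of_deriv_nonneg (convex_Ici 1)
      · exact (h_cont s hs).continuousOn
      · rw [interior_Ici]
        intro t ht
        have ht' : (0:ℝ) < t := lt_trans one_pos ht
        exact (hasDeriv_h s t ht').differentiableAt.differentiableWithinAt
      · rw [interior_Ici]
        intro t ht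
        have ht' : (0:ℝ) < t := lt_trans one_pos ht
        rw [(hasDeriv_h s t ht').deriv]
        have := h1_mono s hs hs1 (Set.mem_Ioi.mpr one_pos) (Set.mem_Ioi.mpr ht') ht.le
        rwa [h1_at_one] at this
    have := hmono (Set.mem_Ici.mpr (le_refl 1)) (Set.mem_Ici.mpr htg.le) htg.le
    rwa [h_at_one s] at this

lemma key_pointwise (s a b : ℝ) (hs : 0 < s) (hs1 : s < 1) (ha : 0 ≤ a) (hb : 0 ≤ b) :
    (s*(1-s)/2) * ((a-b)^2 / ((2-s)/3*a + (1+s)/3*b)) ≤ s*a + (1-s)*b - a^s * b^(1-s) := by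
  rcases eq_or_lt_of_le hb with hb0 | hbpos
  · -- b = 0
    rw [← hb0]
    rw [show ((0:ℝ))^(1-s) = 0 from Real.zero_rpow (by linarith)]
    simp only [mul_zero, add_zero, sub_zero]
    rcases eq_or_lt_of_le ha with ha0 | hapos
    · rw [← ha0]; norm_num
    · have hd : (0:ℝ) < (2-s)/3*a := by
        apply mul_pos _ hapos
        apply div_pos (by linarith) (by norm_num)
      rw [mul_div_assoc', div_le_iff₀ hd]
      nlinarith [sq_nonneg a, mul_pos hs (mul_pos hapos hapos), mul_nonneg (mul_nonneg hs.le (sq_nonneg a)) (by linarith : (0:ℝ) ≤ 1+s)]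
  · -- b > 0
    have hbs : (0:ℝ) < b^s := Real.rpow_pos_of_pos hbpos s
    have e1 : (a/b)^s = a^s / b^s := Real.div_rpow ha hbpos.le s
    have e2 : b^(1-s) = b / b^s := by
      rw [eq_div_iff hbs.ne']
      rw [← Real.rpow_add hbpos, show 1-s+s = 1 by ring, Real.rpow_one]
    have hP : (s*a + (1-s)*b - a^s*b^(1-s)) * ((2-s)/3*a + (1+s)/3*b)
        - s*(1-s)/2*(a-b)^2 = b^2 * hfun s (a/b) := by
      unfold hfun
      rw [e1, e2]
      field_simp
    have hh := h_nonneg s hs hs1 (a/b) (div_nonneg ha hbpos.le)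
    have hPpos : 0 ≤ (s*a + (1-s)*b - a^s*b^(1-s)) * ((2-s)/3*a + (1+s)/3*b)
        - s*(1-s)/2*(a-b)^2 := by
      rw [hP]; positivity
    have hD : (0:ℝ) < (2-s)/3*a + (1+s)/3*b := by
      have h1 : 0 ≤ (2-s)/3*a := by
        apply mul_nonneg _ ha
        apply div_nonneg (by linarith) (by norm_num)
      have h2 : 0 < (1+s)/3*b := by positivity
      linarith
    rw [mul_div_assoc', div_le_iff₀ hD]
    nlinarith [hPpos]

open MeasureTheory in
theorem aux_main {X : Type*} [MeasurableSpace X] (μ : Measure X) (s : ℝ)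
    (hs : 0 < s) (hs1 : s < 1)
    (f g : X → ℝ) (hf : 0 ≤ f) (hg : 0 ≤ g)
    (hfi : Integrable f μ) (hgi : Integrable g μ)
    (hfs : ∫ x, f x ∂μ = 1) (hgs : ∫ x, g x ∂μ = 1) :
    1 - ∫ x, (f x) ^ s * (g x) ^ (1-s) ∂μ
      ≥ (s*(1-s)/2) * ∫ x, (f x - g x)^2 / ((2-s)/3 * f x + (1+s)/3 * g x) ∂μ := by
  have hfm := hfi.aestronglyMeasurable
  have hgm := hgi.aestronglyMeasurable
  set prod : X → ℝ := fun x => (f x) ^ s * (g x) ^ (1-s) with hprod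
  have hpm : AEStronglyMeasurable prod μ :=
    ((Real.continuous_rpow_const hs.le).comp_aestronglyMeasurable hfm).mul
      ((Real.continuous_rpow_const (by linarith)).comp_aestronglyMeasurable hgm)
  have hbound : ∀ x, 0 ≤ prod x ∧ prod x ≤ s * f x + (1-s) * g x := by
    intro x
    constructor
    · exact mul_nonneg (Real.rpow_nonneg (hf x) s) (Real.rpow_nonneg (hg x) (1-s))
    · exact Real.geom_mean_le_arith_mean2_weighted hs.le (by linarith) (hf x) (hg x) (by ring)
  have hsum_i : Integrable (fun x => s * f x + (1-s) * g x) μ :=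
    (hfi.const_mul s).add (hgi.const_mul (1-s))
  have hpi : Integrable prod μ := by
    apply hsum_i.mono' hpm
    filter_upwards with x
    rw [Real.norm_eq_abs, abs_of_nonneg (hbound x).1]
    exact (hbound x).2
  set D : X → ℝ := fun x => s * f x + (1-s) * g x - prod x with hD
  have hDi : Integrable D μ := hsum_i.sub hpi
  set R : X → ℝ := fun x => (f x - g x)^2 / ((2-s)/3 * f x + (1+s)/3 * g x) with hR
  have hkey : ∀ x, (s*(1-s)/2) * R x ≤ D x := fun x =>
    key_pointwise s (f x) (g x) hs hs1 (hf x) (hg x)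
  have hR0 : ∀ x, 0 ≤ R x := by
    intro x
    apply div_nonneg (sq_nonneg _)
    have h1 : 0 ≤ (2-s)/3 * f x := mul_nonneg (div_nonneg (by linarith) (by norm_num)) (hf x)
    have h2 : 0 ≤ (1+s)/3 * g x := mul_nonneg (by positivity) (hg x)
    linarith
  have hRm : AEStronglyMeasurable R μ := by
    apply AEMeasurable.aestronglyMeasurable
    exact (((hfi.aemeasurable.sub hgi.aemeasurable).pow_const 2).div
      ((hfi.aemeasurable.const_mul _).add (hgi.aemeasurable.const_mul _)))
  have hcpos : (0:ℝ) < s*(1-s) := by nlinarith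
  have hRi : Integrable R μ := by
    apply (hDi.const_mul (2/(s*(1-s)))).mono' hRm
    filter_upwards with x
    rw [Real.norm_eq_abs, abs_of_nonneg (hR0 x)]
    calc R x = (2/(s*(1-s))) * ((s*(1-s)/2) * R x) := by rw [← mul_assoc, div_mul_div_comm, mul_comm 2, div_self (mul_pos hcpos two_pos).ne', one_mul]
      _ ≤ (2/(s*(1-s))) * D x := by
          apply mul_le_mul_of_nonneg_left (hkey x)
          positivity
  have hint : ∫ x, D x ∂μ = 1 - ∫ x, prod x ∂μ := by
    rw [hD]
    simp only
    rw [integral_sub hsum_i hpi, integral_add (hfi.const_mul s) (hgi.const_mul (1-s)),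
      integral_const_mul, integral_const_mul, hfs, hgs]
    ring
  have hmono : ∫ x, (s*(1-s)/2) * R x ∂μ ≤ ∫ x, D x ∂μ :=
    integral_mono (hRi.const_mul _) hDi hkey
  rw [integral_const_mul] at hmono
  rw [ge_iff_le, ← hint]
  exact hmono


end HolderAux

theorem holder_stability_pointwise_integral
    {X : Type*} [MeasurableSpace X] (μ : Measure X)
    (p q : ℝ) (hp : 1 < p) (hq : 1 < q) (hpq : 1/p + 1/q = 1)
    (A B : ℝ) (hA : A = (2 - 1/p)/3) (hB : B = (1 + 1/p)/3)
    (f g : X → ℝ) (hf : 0 ≤ f) (hg : 0 ≤ g)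
    (hfi : Integrable f μ) (hgi : Integrable g μ)
    (hfs : ∫ x, f x ∂μ = 1) (hgs : ∫ x, g x ∂μ = 1) :
    1 - ∫ x, (f x) ^ (1/p) * (g x) ^ (1/q) ∂μ
      ≥ (1/(2*p*q)) * ∫ x, (f x - g x)^2 / (A * f x + B * g x) ∂μ := by
  have hp0 : (0:ℝ) < p := lt_trans one_pos hp
  have hq0 : (0:ℝ) < q := lt_trans one_pos hq
  have hs : 0 < 1/p := by positivity
  have hs1 : 1/p < 1 := by rw [div_lt_one hp0]; exact hp
  have hq' : 1/q = 1 - 1/p := by linarith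
  have hc : 1/(2*p*q) = (1/p)*(1-1/p)/2 := by
    rw [← hq']; field_simp
  rw [hc, hA, hB]
  simp only [hq']
  exact aux_main μ (1/p) hs hs1 f g hf hg hfi hgi hfs hgs
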